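/- Let I = [a,b] and J = [c,d] be closed bounded real intervals and f : Jⁿ → I a function. The following are equivalent: (i) f is a quasi-Sugeno integral of the form f(x) = S_μ(φ(x₁),…,φ(xₙ)) with φ(x) = f(x,…,x); (ii) f is a quasi-Sugeno integral; (iii) f is comonotonically modular, nondecreasing, and satisfies f(x ∨ e_S) = f(x,…,x) ∨ f(e_S) for all x ∈ J and S ⊆ X, or satisfies f(x ∧ e_S) = f(x,…,x) ∧ f(e_S) for all x ∈ J and S ⊆ X; (iv) f is nondecreasing and satisfies both f(x ∨ e_S) = f(x,…,x) ∨ f(e_S) and f(x ∧ e_S) = f(x,…,x) ∧ f(e_S) for all x ∈ J and S ⊆ X. -/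
import Mathlib


/-- `S↑_σ(i)` (0-indexed): the set `{σ(i), σ(i+1), …, σ(n-1)}`.  For `i = n` it is empty. -/
def SUp {n : ℕ} (σ : Equiv.Perm (Fin n)) (i : ℕ) : Finset (Fin n) :=
  (Finset.univ.filter (fun j : Fin n => i ≤ (j : ℕ))).image σ

/-- `S↓_σ(i)`: the set `{σ(0), …, σ(i-1)}`.  For `i = 0` it is empty. -/
def SDown {n : ℕ} (σ : Equiv.Perm (Fin n)) (i : ℕ) : Finset (Fin n) :=
  (Finset.univ.filter (fun j : Fin n => (j : ℕ) < i)).image σ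

/-- Two tuples are comonotonic if some permutation sorts both nondecreasingly. -/
def Comonotone {n : ℕ} (x y : Fin n → ℝ) : Prop :=
  ∃ σ : Equiv.Perm (Fin n), Monotone (x ∘ σ) ∧ Monotone (y ∘ σ)

/-- The tuple `r·1_S`. -/
def indTuple {n : ℕ} (S : Finset (Fin n)) (r : ℝ) : Fin n → ℝ :=
  fun j => if j ∈ S then r else 0

/-- The signed Choquet integral of `x` w.r.t. `v`, computed via a sorting permutation. -/
noncomputable def Cv {n : ℕ} (v : Finset (Fin n) → ℝ) (x : Fin n → ℝ) : ℝ :=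
  ∑ i : Fin n,
    x (Tuple.sort x i) *
      (v (SUp (Tuple.sort x) (i : ℕ)) - v (SUp (Tuple.sort x) ((i : ℕ) + 1)))

/-- `f` is the restriction to `Iⁿ` of a signed Choquet integral. -/
def IsSignedChoquetOn {n : ℕ} (I : Set ℝ) (f : (Fin n → ℝ) → ℝ) : Prop :=
  ∃ v : Finset (Fin n) → ℝ, v ∅ = 0 ∧
    ∀ σ : Equiv.Perm (Fin n), ∀ x : Fin n → ℝ, (∀ i, x i ∈ I) → Monotone (x ∘ σ) →
      f x = ∑ i : Fin n, x (σ i) * (v (SUp σ (i : ℕ)) - v (SUp σ ((i : ℕ) + 1)))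

/-- `f` is the restriction to `Iⁿ` of a symmetric signed Choquet integral
`Č_v(x) = C_v(x⁺) - C_v(x⁻)`. -/
def IsSymSignedChoquetOn {n : ℕ} (I : Set ℝ) (f : (Fin n → ℝ) → ℝ) : Prop :=
  ∃ v : Finset (Fin n) → ℝ, v ∅ = 0 ∧
    ∀ x : Fin n → ℝ, (∀ i, x i ∈ I) →
      f x = Cv v (fun i => max (x i) 0) - Cv v (fun i => max (-x i) 0)

/-- Comonotonic modularity (on tuples with entries in `D`). -/
def ComonModularOn {n : ℕ} (D : Set ℝ) (f : (Fin n → ℝ) → ℝ) : Prop :=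
  ∀ x y : Fin n → ℝ, (∀ i, x i ∈ D) → (∀ i, y i ∈ D) → Comonotone x y →
    f x + f y = f (fun i => min (x i) (y i)) + f (fun i => max (x i) (y i))

/-- Comonotonic additivity (on tuples with entries in `D`). -/
def ComonAdditiveOn {n : ℕ} (D : Set ℝ) (f : (Fin n → ℝ) → ℝ) : Prop :=
  ∀ x y : Fin n → ℝ, (∀ i, x i ∈ D) → (∀ i, y i ∈ D) → Comonotone x y →
    (∀ i, x i + y i ∈ D) → f (fun i => x i + y i) = f x + f y

/-- Comonotonic maxitivity. -/
def ComonMaxitiveOn {n : ℕ} (D : Set ℝ) (f : (Fin n → ℝ) → ℝ) : Prop :=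
  ∀ x y : Fin n → ℝ, (∀ i, x i ∈ D) → (∀ i, y i ∈ D) → Comonotone x y →
    f (fun i => max (x i) (y i)) = max (f x) (f y)

/-- Comonotonic minitivity. -/
def ComonMinitiveOn {n : ℕ} (D : Set ℝ) (f : (Fin n → ℝ) → ℝ) : Prop :=
  ∀ x y : Fin n → ℝ, (∀ i, x i ∈ D) → (∀ i, y i ∈ D) → Comonotone x y →
    f (fun i => min (x i) (y i)) = min (f x) (f y)

/-- Horizontal min-additivity. -/
def HorizMinAdditiveOn {n : ℕ} (D : Set ℝ) (f : (Fin n → ℝ) → ℝ) : Prop :=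
  ∀ x : Fin n → ℝ, (∀ i, x i ∈ D) → ∀ c ∈ D, (∀ i, x i - min (x i) c ∈ D) →
    f x = f (fun i => min (x i) c) + f (fun i => x i - min (x i) c)

/-- Horizontal max-additivity. -/
def HorizMaxAdditiveOn {n : ℕ} (D : Set ℝ) (f : (Fin n → ℝ) → ℝ) : Prop :=
  ∀ x : Fin n → ℝ, (∀ i, x i ∈ D) → ∀ c ∈ D, (∀ i, x i - max (x i) c ∈ D) →
    f x = f (fun i => max (x i) c) + f (fun i => x i - max (x i) c)

/-- Horizontal median-additivity (for `I` centered at `0`). -/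
def HorizMedAdditiveOn {n : ℕ} (I : Set ℝ) (f : (Fin n → ℝ) → ℝ) : Prop :=
  ∀ x : Fin n → ℝ, (∀ i, x i ∈ I) → ∀ c ∈ I, 0 ≤ c →
    f x = f (fun i => max (-c) (min (x i) c)) + f (fun i => x i - min (x i) c)
        + f (fun i => x i - max (x i) (-c))

/-- Invariance under horizontal min-differences (for domains of nonnegative tuples). -/
def InvHMinDiffOn {n : ℕ} (D : Set ℝ) (f : (Fin n → ℝ) → ℝ) : Prop :=
  ∀ x : Fin n → ℝ, (∀ i, x i ∈ D) → ∀ c ∈ D,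
    f x - f (fun i => min (x i) c) =
      f (fun i => if x i ≤ c then 0 else x i) -
        f (fun i => min (if x i ≤ c then 0 else x i) c)

/-- Invariance under horizontal max-differences (for domains of nonpositive tuples). -/
def InvHMaxDiffOn {n : ℕ} (D : Set ℝ) (f : (Fin n → ℝ) → ℝ) : Prop :=
  ∀ x : Fin n → ℝ, (∀ i, x i ∈ D) → ∀ c ∈ D,
    f x - f (fun i => max (x i) c) =
      f (fun i => if c ≤ x i then 0 else x i) -
        f (fun i => max (if c ≤ x i then 0 else x i) c)

/-- `⋀_{i ∈ S} x i`, with the convention that the empty infimum is `b`. -/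
noncomputable def infWith {n : ℕ} (b : ℝ) (S : Finset (Fin n)) (x : Fin n → ℝ) : ℝ :=
  if h : S.Nonempty then S.inf' h x else b

/-- An `[a,b]`-valued capacity. -/
def IsCapacityOn {n : ℕ} (a b : ℝ) (μ : Finset (Fin n) → ℝ) : Prop :=
  μ ∅ = a ∧ μ Finset.univ = b ∧ ∀ S T : Finset (Fin n), S ⊆ T → μ S ≤ μ T

/-- `f` is nondecreasing (in each argument) on tuples with entries in `D`. -/
def NondecreasingOn {n : ℕ} (D : Set ℝ) (f : (Fin n → ℝ) → ℝ) : Prop :=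
  ∀ x y : Fin n → ℝ, (∀ i, x i ∈ D) → (∀ i, y i ∈ D) → (∀ i, x i ≤ y i) → f x ≤ f y

set_option linter.unusedSectionVars false
set_option linter.unusedVariables false
set_option maxHeartbeats 1000000

namespace S19
variable {n : ℕ}

lemma mem_SUp {σ : Equiv.Perm (Fin n)} {i : ℕ} {j : Fin n} :
    j ∈ SUp σ i ↔ i ≤ ((σ.symm j : Fin n) : ℕ) := by
  simp only [SUp, Finset.mem_image, Finset.mem_filter, Finset.mem_univ, true_and]
  constructor
  · rintro ⟨l, hl, rfl⟩; simpa using hl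
  · intro h; exact ⟨σ.symm j, h, σ.apply_symm_apply j⟩

lemma sigma_mem_SUp {σ : Equiv.Perm (Fin n)} {i : ℕ} {l : Fin n} (h : i ≤ (l : ℕ)) :
    σ l ∈ SUp σ i := by rw [mem_SUp, Equiv.symm_apply_apply]; exact h

lemma SUp_zero (σ : Equiv.Perm (Fin n)) : SUp σ 0 = Finset.univ := by
  ext j; simp [mem_SUp]

lemma SUp_n (σ : Equiv.Perm (Fin n)) : SUp σ n = ∅ := by
  ext j; simp only [mem_SUp, Finset.notMem_empty, iff_false, not_le]
  exact (σ.symm j).isLt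

lemma SUp_nonempty {σ : Equiv.Perm (Fin n)} (i : Fin n) : (SUp σ (i : ℕ)).Nonempty :=
  ⟨σ i, sigma_mem_SUp le_rfl⟩

lemma SUp_anti {σ : Equiv.Perm (Fin n)} {i i' : ℕ} (h : i ≤ i') : SUp σ i' ⊆ SUp σ i := by
  intro j hj; rw [mem_SUp] at hj ⊢; omega

lemma SUp_eq_univ {σ : Equiv.Perm (Fin n)} {i : ℕ} (hn : 0 < n)
    (h : SUp σ i = Finset.univ) : i = 0 := by
  have := h ▸ Finset.mem_univ (σ ⟨0, hn⟩)
  rw [mem_SUp, Equiv.symm_apply_apply] at this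
  simpa using this

lemma SUp_subset_of_min {σ : Equiv.Perm (Fin n)} {S : Finset (Fin n)} (hS : S.Nonempty) :
    ∃ i₀ : Fin n, σ i₀ ∈ S ∧ S ⊆ SUp σ (i₀ : ℕ) ∧ ∀ j ∈ S, (i₀:ℕ) ≤ ((σ.symm j : Fin n):ℕ) := by
  have hT : (S.image σ.symm).Nonempty := hS.image _
  refine ⟨(S.image σ.symm).min' hT, ?_, ?_, ?_⟩
  · obtain ⟨s, hs, hes⟩ := Finset.mem_image.1 ((S.image σ.symm).min'_mem hT)
    rw [← hes]; simpa using hs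
  · intro j hj
    rw [mem_SUp]
    exact_mod_cast Finset.min'_le _ _ (Finset.mem_image_of_mem _ hj)
  · intro j hj
    exact_mod_cast Finset.min'_le _ _ (Finset.mem_image_of_mem _ hj)

/-- the permutation-free Sugeno form -/
noncomputable def G (b : ℝ) {n : ℕ} (μ : Finset (Fin n) → ℝ) (φ : ℝ → ℝ) (x : Fin n → ℝ) : ℝ :=
  (Finset.univ.powerset).sup' ⟨∅, Finset.empty_mem_powerset _⟩
    (fun S => min (μ S) (infWith b S (fun j => φ (x j))))

def eT {n : ℕ} (c d : ℝ) (S : Finset (Fin n)) : Fin n → ℝ := fun i => if i ∈ S then d else c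

variable {a b c d : ℝ} {μ : Finset (Fin n) → ℝ} {φ : ℝ → ℝ}

lemma eT_mem (hcd : c ≤ d) (S : Finset (Fin n)) (i : Fin n) : eT c d S i ∈ Set.Icc c d := by
  unfold eT; split <;> simp [hcd]

lemma term_le_G (hn : 0 < n) (x : Fin n → ℝ) (S : Finset (Fin n)) :
    min (μ S) (infWith b S (fun j => φ (x j))) ≤ G b μ φ x := by
  exact Finset.le_sup' (fun S => min (μ S) (infWith b S (fun j => φ (x j))))
    (Finset.mem_powerset.2 (Finset.subset_univ S))

lemma a_le_G (hn : 0 < n) (hab : a ≤ b) (hμ0 : μ ∅ = a) (x : Fin n → ℝ) :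
    a ≤ G b μ φ x := by
  have := term_le_G (b := b) (μ := μ) (φ := φ) hn x ∅
  simpa [infWith, hμ0, min_eq_left hab] using this

section
variable (hn : 0 < n) (hab : a ≤ b) (hcd : c ≤ d)
  (hμ0 : μ ∅ = a) (hμu : μ Finset.univ = b)
  (hμm : ∀ S T : Finset (Fin n), S ⊆ T → μ S ≤ μ T)
  (hφm : ∀ y ∈ Set.Icc c d, ∀ z ∈ Set.Icc c d, y ≤ z → φ y ≤ φ z)
  (hφI : ∀ y ∈ Set.Icc c d, φ y ∈ Set.Icc a b)

include hn hab hμ0 hμu hμm hφm hφI in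
/-- hub: the sorted Sugeno formula equals G -/
lemma sorted_eq_G (σ : Equiv.Perm (Fin n)) (x : Fin n → ℝ)
    (hx : ∀ i, x i ∈ Set.Icc c d) (hσ : Monotone (x ∘ σ)) :
    Finset.univ.sup' ⟨⟨0, hn⟩, Finset.mem_univ _⟩
      (fun i : Fin n => min (φ (x (σ i))) (μ (SUp σ (i : ℕ)))) = G b μ φ x := by
  apply le_antisymm
  · apply Finset.sup'_le
    intro i _
    refine le_trans ?_ (term_le_G hn x (SUp σ (i:ℕ)))
    have hne : (SUp σ (i:ℕ)).Nonempty := ⟨σ i, sigma_mem_SUp le_rfl⟩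
    rw [infWith, dif_pos hne]
    rw [min_comm]
    apply min_le_min le_rfl
    apply Finset.le_inf'
    intro j hj
    rw [mem_SUp] at hj
    have : x (σ i) ≤ x (σ (σ.symm j)) := hσ (by exact hj)
    rw [Equiv.apply_symm_apply] at this
    exact hφm _ (hx _) _ (hx _) this
  · apply Finset.sup'_le
    intro S _
    by_cases hS : S.Nonempty
    · obtain ⟨i₀, hi₀S, hsub, -⟩ := SUp_subset_of_min (σ := σ) hS
      refine le_trans ?_ (Finset.le_sup' _ (Finset.mem_univ i₀))
      rw [infWith, dif_pos hS, min_comm]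
      apply min_le_min
      · exact le_trans (Finset.inf'_le _ hi₀S) le_rfl
      · exact hμm _ _ hsub
    · rw [Finset.not_nonempty_iff_eq_empty] at hS
      subst hS
      rw [infWith, dif_neg (by simp), hμ0, min_eq_left hab]
      refine le_trans ?_ (Finset.le_sup' _ (Finset.mem_univ (⟨0, hn⟩ : Fin n)))
      have h1 : a ≤ φ (x (σ ⟨0,hn⟩)) := (hφI _ (hx _)).1
      have h2 : a ≤ μ (SUp σ ((⟨0,hn⟩ : Fin n) : ℕ)) := by
        rw [show (((⟨0,hn⟩ : Fin n)) : ℕ) = 0 from rfl, SUp_zero, hμu]; exact hab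
      exact le_min h1 h2

include hn hab hμ0 hφm in
lemma G_mono (x y : Fin n → ℝ) (hx : ∀ i, x i ∈ Set.Icc c d) (hy : ∀ i, y i ∈ Set.Icc c d)
    (hxy : ∀ i, x i ≤ y i) : G b μ φ x ≤ G b μ φ y := by
  apply Finset.sup'_le
  intro S hSmem
  refine le_trans ?_ (Finset.le_sup' _ hSmem)
  apply min_le_min le_rfl
  by_cases hS : S.Nonempty
  · rw [infWith, dif_pos hS, infWith, dif_pos hS]
    apply Finset.le_inf'
    intro j hj
    exact le_trans (Finset.inf'_le _ hj) (hφm _ (hx _) _ (hy _) (hxy j))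
  · rw [infWith, dif_neg hS, infWith, dif_neg hS]

include hn hab hμ0 hμu hφI in
lemma G_const (x : ℝ) (hx : x ∈ Set.Icc c d) : G b μ φ (fun _ => x) = φ x := by
  apply le_antisymm
  · apply Finset.sup'_le
    intro S _
    by_cases hS : S.Nonempty
    · rw [infWith, dif_pos hS, Finset.inf'_const]; exact min_le_right _ _
    · rw [Finset.not_nonempty_iff_eq_empty] at hS; subst hS
      rw [infWith, dif_neg (by simp), hμ0]
      exact le_trans (min_le_left _ _) (hφI _ hx).1
  · refine le_trans ?_ (Finset.le_sup' _ (Finset.mem_powerset.2 (Finset.subset_univ Finset.univ)))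
    have hne : (Finset.univ : Finset (Fin n)).Nonempty := ⟨⟨0,hn⟩, Finset.mem_univ _⟩
    rw [infWith, dif_pos hne, Finset.inf'_const, hμu]
    exact le_min (hφI _ hx).2 le_rfl

include hn hab hcd hμ0 hμu hμm hφm hφI in
lemma G_max (x : ℝ) (hx : x ∈ Set.Icc c d) (S : Finset (Fin n)) :
    G b μ φ (fun i => max x (eT c d S i)) = max (φ x) (G b μ φ (eT c d S)) := by
  have hu : ∀ i, max x (eT c d S i) ∈ Set.Icc c d := fun i =>
    ⟨le_trans hx.1 (le_max_left _ _), max_le hx.2 (eT_mem hcd S i).2⟩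
  apply le_antisymm
  · apply Finset.sup'_le
    intro T _
    by_cases hT : T.Nonempty
    · by_cases hTS : T ⊆ S
      · refine le_trans ?_ (le_max_right _ _)
        refine le_trans ?_ (term_le_G hn (eT c d S) T)
        apply min_le_min le_rfl
        rw [infWith, dif_pos hT, infWith, dif_pos hT]
        apply le_of_eq
        apply Finset.inf'_congr _ rfl
        intro j hj
        have hjS : j ∈ S := hTS hj
        simp only [eT, if_pos hjS, max_eq_right hx.2]
      · obtain ⟨j₀, hj₀T, hj₀S⟩ := Finset.not_subset.1 hTS
        refine le_trans ?_ (le_max_left _ _)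
        refine le_trans (min_le_right _ _) ?_
        rw [infWith, dif_pos hT]
        refine le_trans (Finset.inf'_le _ hj₀T) ?_
        simp only [eT, if_neg hj₀S, max_eq_left hx.1, le_refl]
    · rw [Finset.not_nonempty_iff_eq_empty] at hT; subst hT
      rw [infWith, dif_neg (by simp), hμ0]
      exact le_trans (min_le_left _ _) (le_trans (hφI _ hx).1 (le_max_left _ _))
  · apply max_le
    · rw [← G_const (c:=c) (d:=d) hn hab hμ0 hμu hφI x hx]
      exact G_mono hn hab hμ0 hφm _ _ (fun _ => hx) hu (fun i => le_max_left _ _)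
    · exact G_mono hn hab hμ0 hφm _ _ (eT_mem hcd S) hu (fun i => le_max_right _ _)

include hn hab hcd hμ0 hμu hμm hφm hφI in
lemma G_min (x : ℝ) (hx : x ∈ Set.Icc c d) (S : Finset (Fin n)) :
    G b μ φ (fun i => min x (eT c d S i)) = min (φ x) (G b μ φ (eT c d S)) := by
  have hv : ∀ i, min x (eT c d S i) ∈ Set.Icc c d := fun i =>
    ⟨le_min hx.1 (eT_mem hcd S i).1, le_trans (min_le_left _ _) hx.2⟩
  apply le_antisymm
  · apply le_min
    · rw [← G_const (c:=c) (d:=d) hn hab hμ0 hμu hφI x hx]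
      exact G_mono hn hab hμ0 hφm _ _ hv (fun _ => hx) (fun i => min_le_left _ _)
    · exact G_mono hn hab hμ0 hφm _ _ hv (eT_mem hcd S) (fun i => min_le_right _ _)
  · obtain ⟨T₀, hT₀mem, hT₀⟩ := Finset.exists_mem_eq_sup'
      (⟨∅, Finset.empty_mem_powerset _⟩ : (Finset.univ : Finset (Fin n)).powerset.Nonempty)
      (fun T => min (μ T) (infWith b T (fun j => φ (eT c d S j))))
    rw [show G b μ φ (eT c d S) = _ from hT₀]
    by_cases hT : T₀.Nonempty
    · refine le_trans ?_ (term_le_G hn (fun i => min x (eT c d S i)) T₀)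
      apply le_min
      · exact le_trans (min_le_right _ _) (min_le_left _ _)
      · rw [infWith, dif_pos hT, infWith, dif_pos hT]
        apply Finset.le_inf'
        intro j hj
        by_cases hjS : j ∈ S
        · refine le_trans (min_le_left _ _) ?_
          simp only [eT, if_pos hjS, min_eq_left hx.2, le_refl]
        · refine le_trans (min_le_right _ _) ?_
          refine le_trans (min_le_right _ _) ?_
          refine le_trans (Finset.inf'_le _ hj) ?_
          simp only [eT, if_neg hjS, min_eq_right hx.1, le_refl]
    · rw [Finset.not_nonempty_iff_eq_empty] at hT; subst hT
      rw [infWith, dif_neg (by simp), hμ0]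
      exact le_trans (min_le_right _ _) (le_trans (min_le_left _ _)
        (a_le_G hn hab hμ0 _))

end

lemma sup'_max (H : (Finset.univ : Finset (Fin n)).Nonempty) (u v : Fin n → ℝ) :
    Finset.univ.sup' H (fun i => max (u i) (v i)) =
      max (Finset.univ.sup' H u) (Finset.univ.sup' H v) := by
  apply le_antisymm
  · exact Finset.sup'_le _ _ fun i hi =>
      max_le_max (Finset.le_sup' _ hi) (Finset.le_sup' _ hi)
  · apply max_le <;> exact Finset.sup'_le _ _ fun i hi =>
      le_trans (by simp) (Finset.le_sup' (fun i => max (u i) (v i)) hi)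

lemma sup'_modular (H : (Finset.univ : Finset (Fin n)).Nonempty) (g h m : Fin n → ℝ)
    (hg : Monotone g) (hh : Monotone h) :
    Finset.univ.sup' H (fun i => min (g i) (m i)) +
      Finset.univ.sup' H (fun i => min (h i) (m i)) =
    Finset.univ.sup' H (fun i => min (min (g i) (h i)) (m i)) +
      Finset.univ.sup' H (fun i => min (max (g i) (h i)) (m i)) := by
  set A := Finset.univ.sup' H (fun i => min (g i) (m i)) with hA
  set B := Finset.univ.sup' H (fun i => min (h i) (m i)) with hB
  have hmax : Finset.univ.sup' H (fun i => min (max (g i) (h i)) (m i)) = max A B := by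
    rw [hA, hB, ← sup'_max]
    apply Finset.sup'_congr H rfl
    intro i _
    rcases le_total (g i) (h i) with hle | hle
    · rw [max_eq_right hle, max_eq_right (min_le_min hle le_rfl)]
    · rw [max_eq_left hle, max_eq_left (min_le_min hle le_rfl)]
  have hmin : Finset.univ.sup' H (fun i => min (min (g i) (h i)) (m i)) = min A B := by
    apply le_antisymm
    · apply Finset.sup'_le
      intro i hi
      apply le_min
      · refine le_trans (min_le_min (min_le_left _ _) le_rfl) ?_
        rw [hA]; exact Finset.le_sup' (fun i => min (g i) (m i)) hi
      · refine le_trans (min_le_min (min_le_right _ _) le_rfl) ?_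
        rw [hB]; exact Finset.le_sup' (fun i => min (h i) (m i)) hi
    · obtain ⟨i, hi, hiA⟩ := Finset.exists_mem_eq_sup' H (fun i => min (g i) (m i))
      obtain ⟨j, hj, hjB⟩ := Finset.exists_mem_eq_sup' H (fun i => min (h i) (m i))
      rw [← hA] at hiA
      rw [← hB] at hjB
      rcases le_total i j with hij | hij
      · refine le_trans ?_ (Finset.le_sup' (fun i => min (min (g i) (h i)) (m i)) hj)
        have h1 : min A B ≤ g j := le_trans (min_le_left _ _)
          (le_trans (le_of_eq hiA) (le_trans (min_le_left _ _) (hg hij)))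
        have h2 : min A B ≤ h j := le_trans (min_le_right _ _) (le_trans (le_of_eq hjB) (min_le_left _ _))
        have h3 : min A B ≤ m j := le_trans (min_le_right _ _) (le_trans (le_of_eq hjB) (min_le_right _ _))
        exact le_min (le_min h1 h2) h3
      · refine le_trans ?_ (Finset.le_sup' (fun i => min (min (g i) (h i)) (m i)) hi)
        have h2 : min A B ≤ h i := le_trans (min_le_right _ _)
          (le_trans (le_of_eq hjB) (le_trans (min_le_left _ _) (hh hij)))
        have h1 : min A B ≤ g i := le_trans (min_le_left _ _) (le_trans (le_of_eq hiA) (min_le_left _ _))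
        have h3 : min A B ≤ m i := le_trans (min_le_left _ _) (le_trans (le_of_eq hiA) (min_le_right _ _))
        exact le_min (le_min h1 h2) h3
  rw [hmax, hmin, min_add_max]

end S19
namespace S19
variable {n : ℕ} {a b c d : ℝ} {f : (Fin n → ℝ) → ℝ}

/-- (A) under (i)-data, f equals G with φ = f∘const -/
lemma P1_G (hn : 0 < n) (hab : a ≤ b)
    (hfI : ∀ x : Fin n → ℝ, (∀ i, x i ∈ Set.Icc c d) → f x ∈ Set.Icc a b)
    (μ : Finset (Fin n) → ℝ) (hcap : IsCapacityOn a b μ)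
    (hmono : ∀ y ∈ Set.Icc c d, ∀ z ∈ Set.Icc c d, y ≤ z → f (fun _ => y) ≤ f (fun _ => z))
    (hF : ∀ σ : Equiv.Perm (Fin n), ∀ x : Fin n → ℝ,
      (∀ i, x i ∈ Set.Icc c d) → Monotone (x ∘ σ) →
      f x = Finset.univ.sup' ⟨⟨0, hn⟩, Finset.mem_univ _⟩
        (fun i : Fin n => min (f (fun _ => x (σ i))) (μ (SUp σ (i : ℕ))))) :
    ∀ x : Fin n → ℝ, (∀ i, x i ∈ Set.Icc c d) →
      f x = G b μ (fun y => f (fun _ => y)) x := by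
  intro x hx
  exact (hF (Tuple.sort x) x hx (Tuple.monotone_sort x)).trans
    (sorted_eq_G hn hab hcap.1 hcap.2.1 hcap.2.2 hmono
      (fun y hy => hfI _ (fun _ => hy)) (Tuple.sort x) x hx (Tuple.monotone_sort x))

/-- (E) under (ii)-data, f of a constant tuple is φ -/
lemma P2_const (hn : 0 < n)
    (μ : Finset (Fin n) → ℝ) (φ : ℝ → ℝ) (hcap : IsCapacityOn a b μ)
    (hφI : ∀ y ∈ Set.Icc c d, φ y ∈ Set.Icc a b)
    (hF : ∀ σ : Equiv.Perm (Fin n), ∀ x : Fin n → ℝ,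
      (∀ i, x i ∈ Set.Icc c d) → Monotone (x ∘ σ) →
      f x = Finset.univ.sup' ⟨⟨0, hn⟩, Finset.mem_univ _⟩
        (fun i : Fin n => min (φ (x (σ i))) (μ (SUp σ (i : ℕ))))) :
    ∀ y ∈ Set.Icc c d, f (fun _ => y) = φ y := by
  intro y hy
  rw [hF 1 (fun _ => y) (fun _ => hy) monotone_const]
  apply le_antisymm
  · exact Finset.sup'_le _ _ fun i _ => min_le_left _ _
  · refine le_trans ?_ (Finset.le_sup'
      (fun i : Fin n => min (φ ((fun _ => y) ((1 : Equiv.Perm (Fin n)) i))) (μ (SUp 1 (i : ℕ))))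
      (Finset.mem_univ (⟨0, hn⟩ : Fin n)))
    have : SUp (1 : Equiv.Perm (Fin n)) (((⟨0,hn⟩ : Fin n)) : ℕ) = Finset.univ := SUp_zero 1
    rw [this, hcap.2.1]
    exact le_min le_rfl (hφI y hy).2

/-- (B) modularity from (i)-data -/
lemma P1_modular (hn : 0 < n)
    (hmono : ∀ y ∈ Set.Icc c d, ∀ z ∈ Set.Icc c d, y ≤ z → f (fun _ => y) ≤ f (fun _ => z))
    (μ : Finset (Fin n) → ℝ) (hcap : IsCapacityOn a b μ)
    (hF : ∀ σ : Equiv.Perm (Fin n), ∀ x : Fin n → ℝ,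
      (∀ i, x i ∈ Set.Icc c d) → Monotone (x ∘ σ) →
      f x = Finset.univ.sup' ⟨⟨0, hn⟩, Finset.mem_univ _⟩
        (fun i : Fin n => min (f (fun _ => x (σ i))) (μ (SUp σ (i : ℕ))))) :
    ComonModularOn (Set.Icc c d) f := by
  intro x y hx hy ⟨σ, hσx, hσy⟩
  have hminm : Monotone ((fun i => min (x i) (y i)) ∘ σ) := hσx.min hσy
  have hmaxm : Monotone ((fun i => max (x i) (y i)) ∘ σ) := hσx.max hσy
  have hminI : ∀ i, min (x i) (y i) ∈ Set.Icc c d := fun i =>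
    ⟨le_min (hx i).1 (hy i).1, le_trans (min_le_left _ _) (hx i).2⟩
  have hmaxI : ∀ i, max (x i) (y i) ∈ Set.Icc c d := fun i =>
    ⟨le_trans (hx i).1 (le_max_left _ _), max_le (hx i).2 (hy i).2⟩
  rw [hF σ x hx hσx, hF σ y hy hσy, hF σ _ hminI hminm, hF σ _ hmaxI hmaxm]
  have H : (Finset.univ : Finset (Fin n)).Nonempty := ⟨⟨0,hn⟩, Finset.mem_univ _⟩
  have e3 : Finset.univ.sup' H
      (fun i : Fin n => min (f (fun _ => min (x (σ i)) (y (σ i)))) (μ (SUp σ (i : ℕ)))) =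
      Finset.univ.sup' H (fun i : Fin n =>
        min (min (f (fun _ => x (σ i))) (f (fun _ => y (σ i)))) (μ (SUp σ (i : ℕ)))) := by
    apply Finset.sup'_congr H rfl
    intro i _
    rcases le_total (x (σ i)) (y (σ i)) with hle | hle
    · rw [min_eq_left hle, min_eq_left (hmono _ (hx _) _ (hy _) hle)]
    · rw [min_eq_right hle, min_eq_right (hmono _ (hy _) _ (hx _) hle)]
  have e4 : Finset.univ.sup' H
      (fun i : Fin n => min (f (fun _ => max (x (σ i)) (y (σ i)))) (μ (SUp σ (i : ℕ)))) =
      Finset.univ.sup' H (fun i : Fin n =>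
        min (max (f (fun _ => x (σ i))) (f (fun _ => y (σ i)))) (μ (SUp σ (i : ℕ)))) := by
    apply Finset.sup'_congr H rfl
    intro i _
    rcases le_total (x (σ i)) (y (σ i)) with hle | hle
    · rw [max_eq_right hle, max_eq_right (hmono _ (hx _) _ (hy _) hle)]
    · rw [max_eq_left hle, max_eq_left (hmono _ (hy _) _ (hx _) hle)]
  rw [show ((⟨⟨0,hn⟩, Finset.mem_univ _⟩ : (Finset.univ : Finset (Fin n)).Nonempty)) = H from rfl]
  rw [e3, e4]
  apply sup'_modular H
  · intro i j hij
    exact hmono _ (hx _) _ (hx _) (hσx hij)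
  · intro i j hij
    exact hmono _ (hy _) _ (hy _) (hσy hij)

end S19
namespace S19
variable {n : ℕ} {a b c d : ℝ} {f : (Fin n → ℝ) → ℝ}

/-- (C)+(D): from (i)-data: nondecreasing and both boundary identities -/
lemma P1_facts (hn : 0 < n) (hab : a ≤ b) (hcd : c ≤ d)
    (hfI : ∀ x : Fin n → ℝ, (∀ i, x i ∈ Set.Icc c d) → f x ∈ Set.Icc a b)
    (μ : Finset (Fin n) → ℝ) (hcap : IsCapacityOn a b μ)
    (hmono : ∀ y ∈ Set.Icc c d, ∀ z ∈ Set.Icc c d, y ≤ z → f (fun _ => y) ≤ f (fun _ => z))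
    (hF : ∀ σ : Equiv.Perm (Fin n), ∀ x : Fin n → ℝ,
      (∀ i, x i ∈ Set.Icc c d) → Monotone (x ∘ σ) →
      f x = Finset.univ.sup' ⟨⟨0, hn⟩, Finset.mem_univ _⟩
        (fun i : Fin n => min (f (fun _ => x (σ i))) (μ (SUp σ (i : ℕ))))) :
    NondecreasingOn (Set.Icc c d) f ∧
    (∀ x ∈ Set.Icc c d, ∀ S : Finset (Fin n),
      f (fun i => max x (if i ∈ S then d else c)) =
        max (f (fun _ => x)) (f (fun i => if i ∈ S then d else c))) ∧
    (∀ x ∈ Set.Icc c d, ∀ S : Finset (Fin n),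
      f (fun i => min x (if i ∈ S then d else c)) =
        min (f (fun _ => x)) (f (fun i => if i ∈ S then d else c))) := by
  have hφm := hmono
  have hφI : ∀ y ∈ Set.Icc c d, f (fun _ => y) ∈ Set.Icc a b :=
    fun y hy => hfI _ (fun _ => hy)
  have hG := P1_G hn hab hfI μ hcap hmono hF
  obtain ⟨hμ0, hμu, hμm⟩ := hcap
  have heI : ∀ S : Finset (Fin n), ∀ i, eT c d S i ∈ Set.Icc c d := fun S => eT_mem hcd S
  refine ⟨?_, ?_, ?_⟩
  · intro x y hx hy hxy
    rw [hG x hx, hG y hy]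
    exact G_mono hn hab hμ0 hφm x y hx hy hxy
  · intro x hx S
    have h1 : f (fun i => max x (eT c d S i)) =
        max (f (fun _ => x)) (f (eT c d S)) := by
      have hu : ∀ i, max x (eT c d S i) ∈ Set.Icc c d := fun i =>
        ⟨le_trans hx.1 (le_max_left _ _), max_le hx.2 (heI S i).2⟩
      rw [hG _ hu, hG _ (heI S)]
      have := G_max (μ := μ) (φ := fun y => f (fun _ => y))
        hn hab hcd hμ0 hμu hμm hφm hφI x hx S
      rw [this]
    exact h1
  · intro x hx S
    have h1 : f (fun i => min x (eT c d S i)) =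
        min (f (fun _ => x)) (f (eT c d S)) := by
      have hv : ∀ i, min x (eT c d S i) ∈ Set.Icc c d := fun i =>
        ⟨le_min hx.1 (heI S i).1, le_trans (min_le_left _ _) hx.2⟩
      rw [hG _ hv, hG _ (heI S)]
      have := G_min (μ := μ) (φ := fun y => f (fun _ => y))
        hn hab hcd hμ0 hμu hμm hφm hφI x hx S
      rw [this]
    exact h1

/-- (G): from comonotonic modularity, one boundary identity yields the other -/
lemma swap_identity (hcd : c ≤ d) (hmod : ComonModularOn (Set.Icc c d) f) :
    ((∀ x ∈ Set.Icc c d, ∀ S : Finset (Fin n),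
        f (fun i => max x (if i ∈ S then d else c)) =
          max (f (fun _ => x)) (f (fun i => if i ∈ S then d else c))) ↔
     (∀ x ∈ Set.Icc c d, ∀ S : Finset (Fin n),
        f (fun i => min x (if i ∈ S then d else c)) =
          min (f (fun _ => x)) (f (fun i => if i ∈ S then d else c)))) := by
  have key : ∀ x ∈ Set.Icc c d, ∀ S : Finset (Fin n),
      f (fun _ => x) + f (fun i => if i ∈ S then d else c) =
        f (fun i => min x (if i ∈ S then d else c)) +
        f (fun i => max x (if i ∈ S then d else c)) := by
    intro x hx S
    have hcom : Comonotone (fun _ => x) (fun i => if i ∈ S then d else c) :=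
      ⟨Tuple.sort (fun i => if i ∈ S then d else c),
        fun _ _ _ => le_rfl, Tuple.monotone_sort _⟩
    exact hmod (fun _ => x) (fun i => if i ∈ S then d else c)
      (fun _ => hx) (fun i => eT_mem hcd S i) hcom
  constructor
  · intro hmax x hx S
    have := key x hx S
    rw [hmax x hx S] at this
    have := min_add_max (f (fun _ => x)) (f (fun i => if i ∈ S then d else c))
    linarith [key x hx S, hmax x hx S]
  · intro hmin x hx S
    have := min_add_max (f (fun _ => x)) (f (fun i => if i ∈ S then d else c))
    linarith [key x hx S, hmin x hx S]

end S19
namespace S19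
variable {n : ℕ} {a b c d : ℝ} {f : (Fin n → ℝ) → ℝ}

lemma P4_to_P1 (hn : 0 < n) (hab : a ≤ b) (hcd : c ≤ d)
    (hfI : ∀ x : Fin n → ℝ, (∀ i, x i ∈ Set.Icc c d) → f x ∈ Set.Icc a b)
    (hnd : NondecreasingOn (Set.Icc c d) f)
    (hmax : ∀ x ∈ Set.Icc c d, ∀ S : Finset (Fin n),
      f (fun i => max x (if i ∈ S then d else c)) =
        max (f (fun _ => x)) (f (fun i => if i ∈ S then d else c)))
    (hmin : ∀ x ∈ Set.Icc c d, ∀ S : Finset (Fin n),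
      f (fun i => min x (if i ∈ S then d else c)) =
        min (f (fun _ => x)) (f (fun i => if i ∈ S then d else c))) :
    ∃ μ : Finset (Fin n) → ℝ, IsCapacityOn a b μ ∧
      (∀ y ∈ Set.Icc c d, ∀ z ∈ Set.Icc c d, y ≤ z →
        f (fun _ => y) ≤ f (fun _ => z)) ∧
      ∀ σ : Equiv.Perm (Fin n), ∀ x : Fin n → ℝ,
        (∀ i, x i ∈ Set.Icc c d) → Monotone (x ∘ σ) →
        f x = Finset.univ.sup' ⟨⟨0, hn⟩, Finset.mem_univ _⟩
          (fun i : Fin n => min (f (fun _ => x (σ i))) (μ (SUp σ (i : ℕ)))) := by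
  classical
  have hmax' : ∀ x ∈ Set.Icc c d, ∀ S : Finset (Fin n),
      f (fun i => max x (eT c d S i)) = max (f (fun _ => x)) (f (eT c d S)) := hmax
  have hmin' : ∀ x ∈ Set.Icc c d, ∀ S : Finset (Fin n),
      f (fun i => min x (eT c d S i)) = min (f (fun _ => x)) (f (eT c d S)) := hmin
  have heI : ∀ S : Finset (Fin n), ∀ i, eT c d S i ∈ Set.Icc c d := fun S => eT_mem hcd S
  have hfe : ∀ S, f (eT c d S) ∈ Set.Icc a b := fun S => hfI _ (heI S)
  have hφI : ∀ y ∈ Set.Icc c d, f (fun _ => y) ∈ Set.Icc a b := fun y hy => hfI _ (fun _ => hy)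
  have hne_univ : (Finset.univ : Finset (Fin n)).Nonempty := ⟨⟨0,hn⟩, Finset.mem_univ _⟩
  have huniv_ne : (Finset.univ : Finset (Fin n)) ≠ ∅ := hne_univ.ne_empty
  set μ' : Finset (Fin n) → ℝ :=
    fun S => if S = Finset.univ then b else if S = ∅ then a else f (eT c d S) with hμ'
  have hμ'u : μ' Finset.univ = b := by simp [hμ']
  have hemptyu : (∅ : Finset (Fin n)) ≠ Finset.univ := fun h => huniv_ne h.symm
  have hμ'0 : μ' ∅ = a := by simp [hμ', hemptyu]
  have hμ'val : ∀ S : Finset (Fin n), S.Nonempty → S ≠ Finset.univ → μ' S = f (eT c d S) := by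
    intro S hS hSu
    rw [hμ']
    simp only [if_neg hSu, if_neg hS.ne_empty]
  -- key: min (f const y) (μ' S) = min (f const y) (f (e_S)) for nonempty S
  have hμ'min : ∀ y, y ∈ Set.Icc c d → ∀ S : Finset (Fin n), S.Nonempty →
      min (f (fun _ => y)) (μ' S) = min (f (fun _ => y)) (f (eT c d S)) := by
    intro y hy S hS
    by_cases hSu : S = Finset.univ
    · subst hSu
      rw [hμ'u]
      have h1 : f (fun _ => y) ≤ b := (hφI y hy).2
      have h2 : f (fun _ => y) ≤ f (eT c d Finset.univ) := by
        apply hnd _ _ (fun _ => hy) (heI _)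
        intro i
        simp only [eT, if_pos (Finset.mem_univ i)]
        exact hy.2
      rw [min_eq_left h1, min_eq_left h2]
    · rw [hμ'val S hS hSu]
  refine ⟨μ', ⟨?_, ?_, ?_⟩, ?_, ?_⟩
  · exact hμ'0
  · exact hμ'u
  · intro S T hST
    rw [hμ']
    by_cases hT : T = Finset.univ
    · subst hT
      simp only [if_pos rfl]
      split_ifs with h1 h2
      · exact le_rfl
      · exact hab
      · exact (hfe S).2
    · have hS : S ≠ Finset.univ := fun h => hT (Finset.univ_subset_iff.1 (h ▸ hST))
      simp only [if_neg hS, if_neg hT]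
      by_cases hSe : S = ∅
      · simp only [if_pos hSe]
        split_ifs with h
        · exact le_rfl
        · exact (hfe T).1
      · have hTe : T ≠ ∅ := fun h => hSe (Finset.subset_empty.1 (h ▸ hST))
        simp only [if_neg hSe, if_neg hTe]
        apply hnd _ _ (heI S) (heI T)
        intro i
        unfold eT
        by_cases hiS : i ∈ S
        · rw [if_pos hiS, if_pos (hST hiS)]
        · rw [if_neg hiS]
          exact (heI T i).1
  · intro y hy z hz hyz
    exact hnd _ _ (fun _ => hy) (fun _ => hz) (fun _ => hyz)
  · intro σ x hx hσ
    apply le_antisymm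
    · -- f x ≤ sup'
      -- choose the greatest k with f(const x_{σk}) ≤ f(e_{SUp σ k})
      set K : Finset (Fin n) := Finset.univ.filter
        (fun i : Fin n => f (fun _ => x (σ i)) ≤ f (eT c d (SUp σ (i : ℕ)))) with hK
      have hK0 : (⟨0, hn⟩ : Fin n) ∈ K := by
        rw [hK, Finset.mem_filter]
        refine ⟨Finset.mem_univ _, ?_⟩
        apply hnd _ _ (fun _ => hx _) (heI _)
        intro i
        have : σ (⟨0,hn⟩ : Fin n) ∈ SUp σ (((⟨0,hn⟩ : Fin n)) : ℕ) := sigma_mem_SUp le_rfl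
        have hmem : i ∈ SUp σ (((⟨0,hn⟩ : Fin n)) : ℕ) := by
          rw [show (((⟨0,hn⟩ : Fin n)) : ℕ) = 0 from rfl, SUp_zero]
          exact Finset.mem_univ i
        simp only [eT, if_pos hmem]
        exact (hx _).2
      have hKne : K.Nonempty := ⟨_, hK0⟩
      set k : Fin n := K.max' hKne with hk
      have hkK : k ∈ K := K.max'_mem hKne
      have hkle : f (fun _ => x (σ k)) ≤ f (eT c d (SUp σ (k : ℕ))) :=
        (Finset.mem_filter.1 hkK).2
      -- step 1 : f x ≤ f (x_{σk} ∨ e_{SUp σ (k+1)})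
      have step1 : f x ≤ f (fun j => max (x (σ k)) (eT c d (SUp σ ((k : ℕ) + 1)) j)) := by
        apply hnd _ _ hx
        · intro j
          exact ⟨le_trans (hx (σ k)).1 (le_max_left _ _),
            max_le (hx (σ k)).2 (heI _ j).2⟩
        · intro j
          by_cases hj : j ∈ SUp σ ((k : ℕ) + 1)
          · refine le_trans (hx j).2 ?_
            simp only [eT, if_pos hj]
            exact le_max_right _ _
          · refine le_trans ?_ (le_max_left _ _)
            rw [mem_SUp, not_le] at hj
            have hle : σ.symm j ≤ k := by
              rw [Fin.le_def]; omega
            have := hσ hle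
            simpa using this
      have step2 : f (fun j => max (x (σ k)) (eT c d (SUp σ ((k : ℕ) + 1)) j)) =
          max (f (fun _ => x (σ k))) (f (eT c d (SUp σ ((k : ℕ) + 1)))) :=
        hmax' (x (σ k)) (hx _) _
      refine le_trans step1 (le_trans (le_of_eq step2) ?_)
      apply max_le
      · -- f const (x σ k) ≤ term at k
        refine le_trans ?_ (Finset.le_sup'
          (fun i : Fin n => min (f (fun _ => x (σ i))) (μ' (SUp σ (i : ℕ))))
          (Finset.mem_univ k))
        apply le_min le_rfl
        by_cases hSu : SUp σ (k : ℕ) = Finset.univ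
        · rw [hSu, hμ'u]
          exact (hφI _ (hx _)).2
        · rw [hμ'val _ (SUp_nonempty k) hSu]
          exact hkle
      · -- f (e_{SUp σ (k+1)}) ≤ sup'
        by_cases hlt : (k : ℕ) + 1 < n
        · set k' : Fin n := ⟨(k : ℕ) + 1, hlt⟩ with hk'
          have hk'K : k' ∉ K := by
            intro hmem
            have := K.le_max' k' hmem
            rw [← hk, Fin.le_def] at this
            simp [hk'] at this
          have hk'lt : f (eT c d (SUp σ ((k' : ℕ)))) < f (fun _ => x (σ k')) := by
            by_contra hcon
            exact hk'K (Finset.mem_filter.2 ⟨Finset.mem_univ _, not_lt.1 hcon⟩)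
          have hSu : SUp σ ((k' : ℕ)) ≠ Finset.univ := by
            intro h
            have := SUp_eq_univ hn h
            simp [hk'] at this
          refine le_trans ?_ (Finset.le_sup'
            (fun i : Fin n => min (f (fun _ => x (σ i))) (μ' (SUp σ (i : ℕ))))
            (Finset.mem_univ k'))
          rw [hμ'val _ (SUp_nonempty k') hSu]
          have : ((k' : ℕ)) = (k : ℕ) + 1 := rfl
          rw [← this]
          exact le_min hk'lt.le le_rfl
        · -- k + 1 = n : e_∅ = const c
          have hkn : (k : ℕ) + 1 = n := by
            have := k.isLt; omega
          rw [hkn, SUp_n]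
          have he : eT c d (∅ : Finset (Fin n)) = fun _ => c := by
            funext i; simp [eT]
          rw [he]
          refine le_trans ?_ (Finset.le_sup'
            (fun i : Fin n => min (f (fun _ => x (σ i))) (μ' (SUp σ (i : ℕ))))
            (Finset.mem_univ k))
          apply le_min
          · exact hnd _ _ (fun _ => ⟨le_rfl, hcd⟩) (fun _ => hx _) (fun _ => (hx _).1)
          · by_cases hSu : SUp σ (k : ℕ) = Finset.univ
            · rw [hSu, hμ'u]
              exact (hφI c ⟨le_rfl, hcd⟩).2
            · rw [hμ'val _ (SUp_nonempty k) hSu]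
              refine hnd _ _ (fun _ => ⟨le_rfl, hcd⟩) (heI _) ?_
              intro i
              exact (heI _ i).1
    · -- sup' ≤ f x
      apply Finset.sup'_le
      intro i _
      rw [hμ'min (x (σ i)) (hx _) _ (SUp_nonempty i)]
      rw [← hmin' (x (σ i)) (hx _) (SUp σ (i : ℕ))]
      apply hnd
      · intro j
        exact ⟨le_min (hx _).1 (heI _ j).1, le_trans (min_le_left _ _) (hx _).2⟩
      · exact hx
      · intro j
        by_cases hj : j ∈ SUp σ (i : ℕ)
        · refine le_trans (min_le_left _ _) ?_
          rw [mem_SUp] at hj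
          have hle : i ≤ σ.symm j := by rw [Fin.le_def]; exact hj
          have := hσ hle
          simpa using this
        · refine le_trans (min_le_right _ _) ?_
          simp only [eT, if_neg hj]
          exact (hx j).1

end S19

open S19 in
theorem statement19 (n : ℕ) (hn : 0 < n) (a b c d : ℝ) (hab : a < b) (hcd : c < d)
    (f : (Fin n → ℝ) → ℝ)
    (hfI : ∀ x : Fin n → ℝ, (∀ i, x i ∈ Set.Icc c d) → f x ∈ Set.Icc a b) :
    ((∃ μ : Finset (Fin n) → ℝ, IsCapacityOn a b μ ∧
        (∀ y ∈ Set.Icc c d, ∀ z ∈ Set.Icc c d, y ≤ z →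
          f (fun _ => y) ≤ f (fun _ => z)) ∧
        ∀ σ : Equiv.Perm (Fin n), ∀ x : Fin n → ℝ,
          (∀ i, x i ∈ Set.Icc c d) → Monotone (x ∘ σ) →
          f x = Finset.sup' Finset.univ ⟨⟨0, hn⟩, Finset.mem_univ _⟩
            (fun i : Fin n => min (f (fun _ => x (σ i))) (μ (SUp σ (i : ℕ)))))
      ↔
      (∃ μ : Finset (Fin n) → ℝ, ∃ φ : ℝ → ℝ, IsCapacityOn a b μ ∧
        (∀ y ∈ Set.Icc c d, ∀ z ∈ Set.Icc c d, y ≤ z → φ y ≤ φ z) ∧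
        (∀ y ∈ Set.Icc c d, φ y ∈ Set.Icc a b) ∧
        ∀ σ : Equiv.Perm (Fin n), ∀ x : Fin n → ℝ,
          (∀ i, x i ∈ Set.Icc c d) → Monotone (x ∘ σ) →
          f x = Finset.sup' Finset.univ ⟨⟨0, hn⟩, Finset.mem_univ _⟩
            (fun i : Fin n => min (φ (x (σ i))) (μ (SUp σ (i : ℕ))))))
    ∧
    ((∃ μ : Finset (Fin n) → ℝ, IsCapacityOn a b μ ∧
        (∀ y ∈ Set.Icc c d, ∀ z ∈ Set.Icc c d, y ≤ z →
          f (fun _ => y) ≤ f (fun _ => z)) ∧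
        ∀ σ : Equiv.Perm (Fin n), ∀ x : Fin n → ℝ,
          (∀ i, x i ∈ Set.Icc c d) → Monotone (x ∘ σ) →
          f x = Finset.sup' Finset.univ ⟨⟨0, hn⟩, Finset.mem_univ _⟩
            (fun i : Fin n => min (f (fun _ => x (σ i))) (μ (SUp σ (i : ℕ)))))
      ↔
      (ComonModularOn (Set.Icc c d) f ∧ NondecreasingOn (Set.Icc c d) f ∧
        ((∀ x ∈ Set.Icc c d, ∀ S : Finset (Fin n),
            f (fun i => max x (if i ∈ S then d else c)) =
              max (f (fun _ => x)) (f (fun i => if i ∈ S then d else c))) ∨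
          (∀ x ∈ Set.Icc c d, ∀ S : Finset (Fin n),
            f (fun i => min x (if i ∈ S then d else c)) =
              min (f (fun _ => x)) (f (fun i => if i ∈ S then d else c))))))
    ∧
    ((∃ μ : Finset (Fin n) → ℝ, IsCapacityOn a b μ ∧
        (∀ y ∈ Set.Icc c d, ∀ z ∈ Set.Icc c d, y ≤ z →
          f (fun _ => y) ≤ f (fun _ => z)) ∧
        ∀ σ : Equiv.Perm (Fin n), ∀ x : Fin n → ℝ,
          (∀ i, x i ∈ Set.Icc c d) → Monotone (x ∘ σ) →
          f x = Finset.sup' Finset.univ ⟨⟨0, hn⟩, Finset.mem_univ _⟩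
            (fun i : Fin n => min (f (fun _ => x (σ i))) (μ (SUp σ (i : ℕ)))))
      ↔
      (NondecreasingOn (Set.Icc c d) f ∧
        (∀ x ∈ Set.Icc c d, ∀ S : Finset (Fin n),
          f (fun i => max x (if i ∈ S then d else c)) =
            max (f (fun _ => x)) (f (fun i => if i ∈ S then d else c))) ∧
        (∀ x ∈ Set.Icc c d, ∀ S : Finset (Fin n),
          f (fun i => min x (if i ∈ S then d else c)) =
            min (f (fun _ => x)) (f (fun i => if i ∈ S then d else c))))) := by
  
  have hab' := hab.le
  have hcd' := hcd.le
  refine ⟨?_, ?_, ?_⟩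
  · constructor
    · rintro ⟨μ, hcap, hmono, hF⟩
      exact ⟨μ, fun y => f (fun _ => y), hcap, hmono,
        (fun y hy => hfI _ (fun _ => hy)), hF⟩
    · rintro ⟨μ, φ, hcap, hφm, hφI, hF⟩
      have hc := P2_const hn μ φ hcap hφI hF
      refine ⟨μ, hcap, ?_, ?_⟩
      · intro y hy z hz hyz
        rw [hc y hy, hc z hz]
        exact hφm y hy z hz hyz
      · intro σ x hx hσ
        rw [hF σ x hx hσ]
        apply Finset.sup'_congr _ rfl
        intro i _
        rw [hc (x (σ i)) (hx (σ i))]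
  · constructor
    · rintro ⟨μ, hcap, hmono, hF⟩
      obtain ⟨hnd, hmx, hmn⟩ := P1_facts hn hab' hcd' hfI μ hcap hmono hF
      exact ⟨P1_modular hn hmono μ hcap hF, hnd, Or.inl hmx⟩
    · rintro ⟨hmod, hnd, hor⟩
      rcases hor with h | h
      · exact P4_to_P1 hn hab' hcd' hfI hnd h ((swap_identity hcd' hmod).1 h)
      · exact P4_to_P1 hn hab' hcd' hfI hnd ((swap_identity hcd' hmod).2 h) h
  · constructor
    · rintro ⟨μ, hcap, hmono, hF⟩
      obtain ⟨hnd, hmx, hmn⟩ := P1_facts hn hab' hcd' hfI μ hcap hmono hF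
      exact ⟨hnd, hmx, hmn⟩
    · rintro ⟨hnd, hmx, hmn⟩
      exact P4_to_P1 hn hab' hcd' hfI hnd hmx hmn
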